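/- Let q be a symmetric bilinear form on a finite-dimensional rational vector space V, let D_1,...,D_m ∈ V with q(D_i,D_j) ≥ 0 for i ≠ j, and let D = ∑_i a_i D_i with all a_i > 0 rational. Then there exist unique P and N in V of the form P = ∑_i b_i D_i, N = ∑_i c_i D_i with rational b_i, c_i ≥ 0, such that: (1) D = P + N; (2) q(P, D_j) ≥ 0 for all j; (3) the Gram matrix of q restricted to the set of D_i with c_i > 0 is negative definite (or N = 0); and (4) q(P, N) = 0. -/

import Mathlib

open Finset

section Helpers

variable {R : Type*} [CommRing R] {m : ℕ}

private lemma qsum_eq (G : Fin m → Fin m → R) (x y : Fin m → R) :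
    ∑ i, ∑ j, x i * y j * G i j = ∑ j, y j * ∑ i, x i * G i j := by
  rw [Finset.sum_comm]
  refine Finset.sum_congr rfl fun j _ => ?_
  rw [Finset.mul_sum]
  exact Finset.sum_congr rfl fun i _ => by ring

private lemma lv_add_pert (G : Fin m → Fin m → R) (b y : Fin m → R) (e : R) (k : Fin m) :
    ∑ i, (b i + e * y i) * G i k = (∑ i, b i * G i k) + e * ∑ i, y i * G i k := by
  simp_rw [add_mul, Finset.sum_add_distrib, Finset.mul_sum]
  congr 1
  exact Finset.sum_congr rfl fun i _ => by ring

private lemma lv_single [DecidableEq (Fin m)] (G : Fin m → Fin m → R) (jj k : Fin m) (e : R) :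
    ∑ i, (if i = jj then e else 0) * G i k = e * G jj k := by
  simp only [ite_mul, zero_mul]
  rw [Finset.sum_ite_eq' Finset.univ jj (fun i => e * G i k)]
  simp

private lemma sum_single [DecidableEq (Fin m)] (jj : Fin m) (e : R) :
    ∑ i : Fin m, (if i = jj then e else 0) = e := by
  rw [Finset.sum_ite_eq' Finset.univ jj (fun _ => e)]
  simp

private lemma qsum_sub (G : Fin m → Fin m → R) (u v w t : Fin m → R) :
    ∑ i, ∑ j, (u i - v i) * (w j - t j) * G i j
      = ((∑ i, ∑ j, u i * w j * G i j) - (∑ i, ∑ j, u i * t j * G i j))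
        - ((∑ i, ∑ j, v i * w j * G i j) - (∑ i, ∑ j, v i * t j * G i j)) := by
  have h : ∀ i j, (u i - v i) * (w j - t j) * G i j
      = (u i * w j * G i j - u i * t j * G i j) - (v i * w j * G i j - v i * t j * G i j) :=
    fun i j => by ring
  simp_rw [h, Finset.sum_sub_distrib]

private lemma qsum_symm (G : Fin m → Fin m → R) (hsym : ∀ i j, G i j = G j i)
    (x y : Fin m → R) :
    ∑ i, ∑ j, x i * y j * G i j = ∑ i, ∑ j, y i * x j * G i j := by
  rw [Finset.sum_comm]
  refine Finset.sum_congr rfl fun j _ => Finset.sum_congr rfl fun i _ => ?_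
  rw [hsym i j]; ring

end Helpers

private lemma quad_eval {m : ℕ} (G : Fin m → Fin m → ℝ) (hsym : ∀ i j, G i j = G j i)
    (y : Fin m → ℝ) (j : Fin m) (c d : ℝ) :
    ∑ i, ∑ k, (c * y i + (if i = j then d else 0)) * (c * y k + (if k = j then d else 0)) * G i k
      = c^2 * (∑ i, ∑ k, y i * y k * G i k) + 2*c*d*(∑ i, y i * G i j) + d^2 * G j j := by
  classical
  have h : ∀ i k, (c * y i + (if i = j then d else 0)) * (c * y k + (if k = j then d else 0)) * G i k
      = c^2 * (y i * y k * G i k) + (if k = j then c*d*(y i * G i k) else 0)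
        + ((if i = j then c*d*(y k * G i k) else 0)
        + (if i = j then (if k = j then d^2 * G i k else 0) else 0)) := by
    intro i k; split_ifs <;> ring
  simp_rw [h, Finset.sum_add_distrib]
  have h1 : ∑ i, ∑ k, c^2 * (y i * y k * G i k) = c^2 * ∑ i, ∑ k, y i * y k * G i k := by
    simp_rw [← Finset.mul_sum]
  have h2 : ∑ i : Fin m, ∑ k : Fin m, (if k = j then c*d*(y i * G i k) else 0)
      = c*d*∑ i, y i * G i j := by
    simp_rw [Finset.sum_ite_eq' Finset.univ j, Finset.mem_univ, if_true, Finset.mul_sum]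
  have h3 : ∑ i : Fin m, ∑ k : Fin m, (if i = j then c*d*(y k * G i k) else 0)
      = c*d*∑ i, y i * G i j := by
    have e1 : ∀ i : Fin m, ∑ k : Fin m, (if i = j then c*d*(y k * G i k) else 0)
        = if i = j then c*d*(∑ k, y k * G i k) else 0 := by
      intro i; split_ifs with hij
      · rw [Finset.mul_sum]
      · simp
    simp_rw [e1]
    rw [Finset.sum_ite_eq' Finset.univ j]
    simp only [Finset.mem_univ, if_true]
    congr 1
    refine Finset.sum_congr rfl fun k _ => ?_
    rw [hsym j k]
  have h4 : ∑ i : Fin m, ∑ k : Fin m,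
      (if i = j then (if k = j then d^2 * G i k else 0) else 0) = d^2 * G j j := by
    have e1 : ∀ i : Fin m, ∑ k : Fin m, (if i = j then (if k = j then d^2 * G i k else 0) else 0)
        = if i = j then d^2 * G i j else 0 := by
      intro i; split_ifs with hij
      · rw [Finset.sum_ite_eq' Finset.univ j]; simp
      · simp
    simp_rw [e1]
    rw [Finset.sum_ite_eq' Finset.univ j]
    simp
  rw [h1, h2, h3, h4]
  ring

set_option maxHeartbeats 1000000 in
private lemma real_core {m : ℕ} (G : Fin m → Fin m → ℝ) (hsym : ∀ i j, G i j = G j i)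
    (hpos : ∀ i j, i ≠ j → 0 ≤ G i j) (A : Fin m → ℝ) (hA : ∀ i, 0 < A i) :
    ∃ b : Fin m → ℝ, (∀ i, 0 ≤ b i) ∧ (∀ i, b i ≤ A i) ∧
      (∀ j, 0 ≤ ∑ i, b i * G i j) ∧ (∀ j, b j < A j → ∑ i, b i * G i j = 0) ∧
      (∀ x : Fin m → ℝ, (∀ i, x i ≠ 0 → b i < A i) → x ≠ 0 →
        ∑ i, ∑ j, x i * x j * G i j < 0) := by
  classical
  set T : Set (Fin m → ℝ) :=
    {x | (∀ i, 0 ≤ x i) ∧ (∀ i, x i ≤ A i) ∧ ∀ j, 0 ≤ ∑ i, x i * G i j} with hTdef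
  have hTc : IsCompact T := by
    apply IsCompact.of_isClosed_subset (isCompact_Icc (a := (0 : Fin m → ℝ)) (b := A))
    · have : T = (⋂ i, {x : Fin m → ℝ | 0 ≤ x i}) ∩ ((⋂ i, {x : Fin m → ℝ | x i ≤ A i})
          ∩ (⋂ j, {x : Fin m → ℝ | 0 ≤ ∑ i, x i * G i j})) := by
        ext x; simp [hTdef, Set.mem_iInter]
      rw [this]
      refine IsClosed.inter ?_ (IsClosed.inter ?_ ?_) <;> refine isClosed_iInter fun i => ?_
      · exact isClosed_le continuous_const (continuous_apply i)
      · exact isClosed_le (continuous_apply i) continuous_const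
      · exact isClosed_le continuous_const
          (continuous_finset_sum _ fun k _ => (continuous_apply k).mul continuous_const)
    · intro x hx
      rw [Set.mem_Icc]
      exact ⟨fun i => hx.1 i, fun i => hx.2.1 i⟩
  have h0T : (0 : Fin m → ℝ) ∈ T := by
    refine ⟨fun i => le_refl _, fun i => (hA i).le, fun j => ?_⟩
    simp
  obtain ⟨b, hbT, hbmax⟩ := hTc.exists_isMaxOn ⟨0, h0T⟩
    (continuous_finset_sum _ fun i _ => continuous_apply i).continuousOn
  obtain ⟨hb0, hbA, hbnef⟩ := hbT
  -- slackness
  have slack : ∀ j, b j < A j → ∑ i, b i * G i j = 0 := by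
    intro j hj
    by_contra hne
    have hLp : 0 < ∑ i, b i * G i j := lt_of_le_of_ne (hbnef j) (Ne.symm hne)
    set L := ∑ i, b i * G i j with hLdef
    set ε := min (A j - b j) (L / (|G j j| + 1)) with hεdef
    have hε : 0 < ε := lt_min (by linarith) (div_pos hLp (by positivity))
    set x' : Fin m → ℝ := fun i => b i + (if i = j then ε else 0) with hx'def
    have hx'T : x' ∈ T := by
      refine ⟨fun i => ?_, fun i => ?_, fun k => ?_⟩
      · simp only [hx'def]; split_ifs <;> [linarith [hb0 i]; simpa using hb0 i]
      · simp only [hx'def]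
        split_ifs with h
        · subst h; have := min_le_left (A i - b i) (L / (|G i i| + 1)); linarith
        · simpa using hbA i
      · have hsum : ∑ i, x' i * G i k = (∑ i, b i * G i k) + ε * G j k := by
          simp only [hx'def, add_mul, Finset.sum_add_distrib]
          congr 1
          exact lv_single G j k ε
        rw [hsum]
        by_cases hkj : k = j
        · subst hkj
          have hεle : ε ≤ L / (|G k k| + 1) := min_le_right _ _
          have habs : -(|G k k|) ≤ G k k := neg_abs_le _
          have h1 : ε * |G k k| ≤ (L / (|G k k| + 1)) * |G k k| :=
            mul_le_mul_of_nonneg_right hεle (abs_nonneg _)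
          have h2 : (L / (|G k k| + 1)) * |G k k| ≤ L := by
            rw [div_mul_eq_mul_div, div_le_iff₀ (by positivity)]
            nlinarith [abs_nonneg (G k k)]
          have h3 : -(ε * G k k) ≤ ε * |G k k| := by
            nlinarith [hε.le, neg_abs_le (G k k), abs_nonneg (G k k)]
          linarith
        · have := hpos j k (fun h => hkj (h.symm))
          have := hbnef k
          nlinarith [hε.le]
    have hlt : ∑ i, b i < ∑ i, x' i := by
      have : ∑ i, x' i = (∑ i, b i) + ε := by
        simp only [hx'def, Finset.sum_add_distrib]
        congr 1
        exact sum_single j ε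
      linarith
    exact absurd (hbmax hx'T) (not_le.mpr hlt)
  refine ⟨b, hb0, hbA, hbnef, slack, ?_⟩
  -- negative definiteness on {i | b i < A i}
  intro x hxsupp hxne
  by_contra hcon
  push_neg at hcon
  set y0 : Fin m → ℝ := fun i => |x i| with hy0def
  have hy0Q : (0:ℝ) ≤ ∑ i, ∑ j, y0 i * y0 j * G i j := by
    refine le_trans hcon (Finset.sum_le_sum fun i _ => Finset.sum_le_sum fun j _ => ?_)
    by_cases hij : i = j
    · subst hij; simp only [hy0def]; rw [abs_mul_abs_self]
    · have := hpos i j hij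
      have : x i * x j ≤ y0 i * y0 j := by
        simp only [hy0def]; rw [← abs_mul]; exact le_abs_self _
      nlinarith [hpos i j hij]
  have hs0 : 0 < ∑ i, y0 i := by
    obtain ⟨k, hk⟩ := Function.ne_iff.mp hxne
    refine Finset.sum_pos' (fun i _ => abs_nonneg _) ⟨k, Finset.mem_univ k, ?_⟩
    simpa [hy0def] using hk
  set s0 := ∑ i, y0 i with hs0def
  set Δ : Set (Fin m → ℝ) := {y | (∀ i, 0 ≤ y i) ∧ (∀ i, y i ≤ s0) ∧
    (∀ i, ¬ b i < A i → y i = 0) ∧ ∑ i, y i = s0} with hΔdef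
  have hΔc : IsCompact Δ := by
    apply IsCompact.of_isClosed_subset
      (isCompact_Icc (a := (0 : Fin m → ℝ)) (b := fun _ => s0))
    · have : Δ = (⋂ i, {y : Fin m → ℝ | 0 ≤ y i}) ∩ (((⋂ i, {y : Fin m → ℝ | y i ≤ s0})
          ∩ (⋂ i, {y : Fin m → ℝ | ¬ b i < A i → y i = 0}))
          ∩ {y : Fin m → ℝ | ∑ i, y i = s0}) := by
        ext y; simp [hΔdef, Set.mem_iInter]; tauto
      rw [this]
      refine IsClosed.inter (isClosed_iInter fun i =>
          isClosed_le continuous_const (continuous_apply i))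
        (IsClosed.inter (IsClosed.inter (isClosed_iInter fun i =>
          isClosed_le (continuous_apply i) continuous_const)
          (isClosed_iInter fun i => ?_)) ?_)
      · by_cases h : b i < A i
        · have he : {y : Fin m → ℝ | ¬ b i < A i → y i = 0} = Set.univ := by
            ext y; simp [h]
          rw [he]; exact isClosed_univ
        · have he : {y : Fin m → ℝ | ¬ b i < A i → y i = 0} = {y : Fin m → ℝ | y i = 0} := by
            ext y; simp [h]
          rw [he]; exact isClosed_eq (continuous_apply i) continuous_const
      · exact isClosed_eq (continuous_finset_sum _ fun i _ => continuous_apply i)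
          continuous_const
    · intro y hy
      rw [Set.mem_Icc]
      exact ⟨fun i => hy.1 i, fun i => hy.2.1 i⟩
  have hy0Δ : y0 ∈ Δ := by
    refine ⟨fun i => abs_nonneg _, fun i => ?_, fun i hi => ?_, hs0def.symm⟩
    · exact Finset.single_le_sum (f := y0) (fun i _ => abs_nonneg _) (Finset.mem_univ i)
    · by_contra hne0
      exact hi (hxsupp i (fun h0 => hne0 (by simp [hy0def, h0])))
  obtain ⟨z, hzΔ, hzmax⟩ := hΔc.exists_isMaxOn ⟨y0, hy0Δ⟩
    (continuous_finset_sum _ fun i _ => continuous_finset_sum _ fun j _ =>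
      ((continuous_apply i).mul (continuous_apply j)).mul continuous_const).continuousOn
  obtain ⟨hz0, hzs, hzsupp, hzsum⟩ := hzΔ
  set H := ∑ i, ∑ j, z i * z j * G i j with hHdef
  have hH0 : 0 ≤ H := le_trans hy0Q (hzmax hy0Δ)
  have kkt : ∀ j, b j < A j → s0 * (∑ i, z i * G i j) ≤ H := by
    intro j hj
    by_contra hLc
    push_neg at hLc
    set lvj := ∑ i, z i * G i j with hlvdef
    set L := 2*(s0 * lvj - H) with hLdef
    set Qc := H - 2*s0*lvj + s0^2 * G j j with hQcdef
    have hL0 : 0 < L := by rw [hLdef]; nlinarith [hLc]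
    clear_value lvj L Qc
    have key : ∀ t : ℝ, 0 ≤ t → t ≤ 1 → t * L + t^2 * Qc ≤ 0 := by
      intro t ht0 ht1
      set yt : Fin m → ℝ := fun i => (1-t) * z i + (if i = j then t*s0 else 0) with hytdef
      have hytΔ : yt ∈ Δ := by
        refine ⟨fun i => ?_, fun i => ?_, fun i hi => ?_, ?_⟩
        · simp only [hytdef]
          split_ifs <;> nlinarith [hz0 i, hs0.le]
        · simp only [hytdef]
          split_ifs with h <;> nlinarith [hzs i, hz0 i]
        · have hij : i ≠ j := fun h => hi (h ▸ hj)
          simp only [hytdef, if_neg hij, hzsupp i hi]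
          ring
        · simp only [hytdef]
          rw [Finset.sum_add_distrib, sum_single j (t*s0), ← Finset.mul_sum, hzsum]
          ring
      have hle := hzmax hytΔ
      simp only [hytdef] at hle
      have hle2 : ∑ i, ∑ k, ((1-t) * z i + (if i = j then t*s0 else 0))
          * ((1-t) * z k + (if k = j then t*s0 else 0)) * G i k ≤ H := hle
      rw [quad_eval G hsym z j (1-t) (t*s0), ← hlvdef, ← hHdef] at hle2
      have hid : t * L + t^2 * Qc
          = ((1-t)^2 * H + 2*(1-t)*(t*s0)*lvj + (t*s0)^2 * G j j) - H := by
        rw [hLdef, hQcdef]; ring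
      rw [hid]
      linarith [hle2]
    obtain ⟨t, ht0, ht1, htle⟩ : ∃ t : ℝ, 0 < t ∧ t ≤ 1 ∧ t ≤ L/(2*(|Qc|+1)) :=
      ⟨min 1 (L/(2*(|Qc|+1))), lt_min one_pos (div_pos hL0 (by positivity)),
        min_le_left _ _, min_le_right _ _⟩
    have hkey := key t ht0.le ht1
    have e1 : t*|Qc| ≤ L/2 := by
      calc t*|Qc| ≤ (L/(2*(|Qc|+1)))*|Qc| :=
            mul_le_mul_of_nonneg_right htle (abs_nonneg _)
        _ ≤ L/2 := by
            rw [div_mul_eq_mul_div, div_le_div_iff₀ (by positivity) (by norm_num : (0:ℝ) < 2)]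
            nlinarith [abs_nonneg Qc]
    have e2 : -(t^2*Qc) ≤ t*(L/2) := by
      have h1 : -Qc ≤ |Qc| := neg_le_abs Qc
      have h2 : t^2*(-Qc) ≤ t^2*|Qc| := mul_le_mul_of_nonneg_left h1 (sq_nonneg t)
      have h3 : t^2*|Qc| = t*(t*|Qc|) := by ring
      have h4 : t*(t*|Qc|) ≤ t*(L/2) := mul_le_mul_of_nonneg_left e1 ht0.le
      linarith
    have hpt : 0 < t*L := mul_pos ht0 hL0
    nlinarith [hkey, e2]
  have hQz : H = ∑ j, z j * ∑ i, z i * G i j := by rw [hHdef]; exact qsum_eq G z z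
  have term_np : ∀ j, z j * (s0 * (∑ i, z i * G i j) - H) ≤ 0 := by
    intro j
    by_cases hj : b j < A j
    · have := kkt j hj
      nlinarith [hz0 j]
    · rw [hzsupp j hj]
      simp
  have sum0 : ∑ j, z j * (s0 * (∑ i, z i * G i j) - H) = 0 := by
    have e1 : ∀ j, z j * (s0 * (∑ i, z i * G i j) - H)
        = s0 * (z j * ∑ i, z i * G i j) - z j * H := fun j => by ring
    simp_rw [e1, Finset.sum_sub_distrib, ← Finset.mul_sum, ← Finset.sum_mul, hzsum, ← hQz]
    ring
  have term0 : ∀ j, z j * (s0 * (∑ i, z i * G i j) - H) = 0 := by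
    intro j
    by_contra hne
    have hlt : z j * (s0 * (∑ i, z i * G i j) - H) < 0 := lt_of_le_of_ne (term_np j) hne
    have : ∑ j, z j * (s0 * (∑ i, z i * G i j) - H) < ∑ _j : Fin m, (0:ℝ) :=
      Finset.sum_lt_sum (fun i _ => term_np i) ⟨j, Finset.mem_univ j, hlt⟩
    rw [Finset.sum_const_zero, sum0] at this
    exact lt_irrefl 0 this
  have lvnn : ∀ k, 0 ≤ ∑ i, z i * G i k := by
    intro k
    by_cases hzk : z k = 0
    · refine Finset.sum_nonneg fun i _ => ?_
      by_cases hik : i = k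
      · rw [hik, hzk]; simp
      · exact mul_nonneg (hz0 i) (hpos i k hik)
    · have h1 := term0 k
      have h2 : s0 * (∑ i, z i * G i k) - H = 0 := by
        rcases mul_eq_zero.mp h1 with h | h
        · exact absurd h hzk
        · exact h
      nlinarith [hH0, hs0]
  obtain ⟨k, -, hk⟩ := Finset.exists_lt_of_sum_lt
    (f := fun _ : Fin m => (0:ℝ)) (g := z) (s := Finset.univ)
    (by rw [Finset.sum_const_zero, hzsum]; exact hs0)
  have hbk : b k < A k := by
    by_contra h
    exact absurd (hzsupp k h) (ne_of_gt hk)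
  set S : Finset (Fin m) := Finset.univ.filter (fun i => b i < A i) with hSdef
  have hkS : k ∈ S := by simp [hSdef, hbk]
  have hδpos : 0 < S.inf' ⟨k, hkS⟩ (fun i => A i - b i) := by
    refine (Finset.lt_inf'_iff _).2 ?_
    intro i hi
    simp only [hSdef, Finset.mem_filter] at hi
    linarith [hi.2]
  set δ := S.inf' ⟨k, hkS⟩ (fun i => A i - b i) with hδdef
  set ε := δ / s0 with hεdef
  have hεpos : 0 < ε := div_pos hδpos hs0
  have hb'T : (fun i => b i + ε * z i) ∈ T := by
    refine ⟨fun i => ?_, fun i => ?_, fun kk => ?_⟩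
    · show (0:ℝ) ≤ b i + ε * z i
      nlinarith [hb0 i, hz0 i, hεpos.le]
    · show b i + ε * z i ≤ A i
      by_cases hzi : z i = 0
      · simp [hzi, hbA i]
      · have hbi : b i < A i := by
          by_contra h; exact hzi (hzsupp i h)
        have hiS : i ∈ S := by simp [hSdef, hbi]
        have h1 : δ ≤ A i - b i := Finset.inf'_le _ hiS
        have h2 : ε * z i ≤ ε * s0 := mul_le_mul_of_nonneg_left (hzs i) hεpos.le
        have h3 : ε * s0 = δ := by
          rw [hεdef]; field_simp
        linarith
    · show (0:ℝ) ≤ ∑ i, (b i + ε * z i) * G i kk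
      rw [lv_add_pert]
      nlinarith [hbnef kk, hεpos.le, lvnn kk]
  have hflt : ∑ i, b i < ∑ i, (b i + ε * z i) := by
    rw [Finset.sum_add_distrib, ← Finset.mul_sum, hzsum]
    nlinarith [mul_pos hεpos hs0]
  exact absurd (hbmax hb'T) (not_le.mpr hflt)

set_option maxHeartbeats 1000000 in
private lemma rat_core {m : ℕ} (g : Fin m → Fin m → ℚ) (hsym : ∀ i j, g i j = g j i)
    (hpos : ∀ i j, i ≠ j → 0 ≤ g i j) (a : Fin m → ℚ) (ha : ∀ i, 0 < a i) :
    ∃ b : Fin m → ℚ, (∀ i, 0 ≤ b i) ∧ (∀ i, b i ≤ a i) ∧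
      (∀ j, 0 ≤ ∑ i, b i * g i j) ∧ (∀ j, b j < a j → ∑ i, b i * g i j = 0) ∧
      (∀ x : Fin m → ℚ, (∀ i, x i ≠ 0 → b i < a i) → x ≠ 0 →
        ∑ i, ∑ j, x i * x j * g i j < 0) := by
  classical
  obtain ⟨B, hB0, hBA, hBnef, hBslack, hBneg⟩ :=
    real_core (fun i j => (g i j : ℝ))
      (fun i j => show ((g i j : ℚ) : ℝ) = ((g j i : ℚ) : ℝ) by exact_mod_cast hsym i j)
      (fun i j hij => show (0:ℝ) ≤ ((g i j : ℚ) : ℝ) by exact_mod_cast hpos i j hij)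
      (fun i => (a i : ℝ))
      (fun i => show (0:ℝ) < ((a i : ℚ) : ℝ) by exact_mod_cast ha i)
  set S : Finset (Fin m) := Finset.univ.filter (fun i => B i < (a i : ℝ)) with hSdef
  have negQ : ∀ x : Fin m → ℚ, (∀ i, x i ≠ 0 → i ∈ S) → x ≠ 0 →
      ∑ i, ∑ j, x i * x j * g i j < 0 := by
    intro x hx hxne
    have h1 : ∑ i, ∑ j, (x i : ℝ) * (x j : ℝ) * (g i j : ℝ) < 0 := by
      refine hBneg (fun i => (x i : ℝ)) (fun i hi => ?_) ?_
      · have hxi : x i ≠ 0 := fun h => hi (by simp [h])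
        exact (Finset.mem_filter.mp (hx i hxi)).2
      · intro h
        apply hxne
        funext i
        have h2 := congrFun h i
        simp only [Pi.zero_apply] at h2 ⊢
        exact_mod_cast h2
    have h2 : ((∑ i, ∑ j, x i * x j * g i j : ℚ) : ℝ) < 0 := by push_cast; exact h1
    exact_mod_cast h2
  set M : Matrix {i // i ∈ S} {i // i ∈ S} ℚ := fun i j => g i.1 j.1 with hMdef
  have hMdet : M.det ≠ 0 := by
    intro hdet
    obtain ⟨v, hv0, hvk⟩ := Matrix.exists_mulVec_eq_zero_iff.mpr hdet
    set x : Fin m → ℚ := fun i => if h : i ∈ S then v ⟨i, h⟩ else 0 with hxdef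
    have hxne : x ≠ 0 := by
      intro h
      apply hv0
      funext i
      have := congrFun h i.1
      simpa [hxdef, i.2] using this
    have hsupp : ∀ i, x i ≠ 0 → i ∈ S := by
      intro i hi
      by_contra h
      exact hi (by simp [hxdef, h])
    have hzero : ∑ i, ∑ j, x i * x j * g i j = 0 := by
      rw [qsum_eq g x x]
      refine Finset.sum_eq_zero fun j _ => ?_
      by_cases hj : j ∈ S
      · have hinner : ∑ i, x i * g i j = 0 := by
          have e1 : ∑ i, x i * g i j = ∑ i ∈ S, x i * g i j := by
            symm
            apply Finset.sum_subset (Finset.subset_univ S)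
            intro i _ hiS
            simp [hxdef, hiS]
          have e2 : ∑ i ∈ S, x i * g i j = ∑ i : {i // i ∈ S}, x i.1 * g i.1 j :=
            (Finset.sum_coe_sort S (fun i => x i * g i j)).symm
          have e3 : ∀ i : {i // i ∈ S}, x i.1 * g i.1 j = M ⟨j, hj⟩ i * v i := by
            intro i
            rw [hMdef]
            simp only [hxdef, dif_pos i.2]
            rw [hsym i.1 j]
            ring
          rw [e1, e2, Finset.sum_congr rfl (fun i _ => e3 i)]
          have := congrFun hvk ⟨j, hj⟩
          simpa [Matrix.mulVec, dotProduct] using this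
        rw [hinner, mul_zero]
      · simp [hxdef, hj]
    exact absurd hzero (ne_of_lt (negQ x hsupp hxne))
  set rhs : {i // i ∈ S} → ℚ := fun j => -(∑ i ∈ Sᶜ, a i * g i j.1) with hrdef
  set v := M⁻¹.mulVec rhs with hvdef
  have hMv : M.mulVec v = rhs := by
    rw [hvdef, Matrix.mulVec_mulVec, Matrix.mul_nonsing_inv _ (isUnit_iff_ne_zero.mpr hMdet),
      Matrix.one_mulVec]
  set bq : Fin m → ℚ := fun i => if h : i ∈ S then v ⟨i, h⟩ else a i with hbqdef
  set Mr : Matrix {i // i ∈ S} {i // i ∈ S} ℝ := M.map (fun r : ℚ => (r : ℝ)) with hMrdef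
  have hMrdet : Mr.det ≠ 0 := by
    have e : ((Rat.castHom ℝ) M.det) = Mr.det := by
      rw [RingHom.map_det]
      congr 1
    rw [← e]
    simpa using hMdet
  have hMrinj : ∀ u w : {i // i ∈ S} → ℝ, Mr.mulVec u = Mr.mulVec w → u = w := by
    intro u w h
    have h2 := congrArg (fun t => (Mr⁻¹).mulVec t) h
    simpa [Matrix.mulVec_mulVec,
      Matrix.nonsing_inv_mul _ (isUnit_iff_ne_zero.mpr hMrdet), Matrix.one_mulVec] using h2
  have hofS : ∀ i, i ∉ S → B i = (a i : ℝ) := by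
    intro i hi
    have h : ¬ B i < (a i : ℝ) := by
      intro hlt
      exact hi (by simp [hSdef, hlt])
    exact le_antisymm (hBA i) (not_lt.mp h)
  have hsolve1 : Mr.mulVec (fun i => B i.1) = (fun j => ((rhs j : ℚ) : ℝ)) := by
    funext j
    have hjS : B j.1 < (a j.1 : ℝ) := (Finset.mem_filter.mp j.2).2
    have hslack := hBslack j.1 hjS
    have hsplit : (∑ i ∈ S, B i * (g i j.1 : ℝ)) + ∑ i ∈ Sᶜ, B i * (g i j.1 : ℝ)
        = ∑ i, B i * (g i j.1 : ℝ) := Finset.sum_add_sum_compl S _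
    have hcompl : ∑ i ∈ Sᶜ, B i * (g i j.1 : ℝ) = ∑ i ∈ Sᶜ, (a i : ℝ) * (g i j.1 : ℝ) :=
      Finset.sum_congr rfl fun i hi => by rw [hofS i (by simpa using hi)]
    have e1 : Mr.mulVec (fun i => B i.1) j = ∑ i : {i // i ∈ S}, (g j.1 i.1 : ℝ) * B i.1 := by
      simp [Matrix.mulVec, dotProduct, hMrdef, hMdef]; rfl
    have e2 : ∑ i : {i // i ∈ S}, (g j.1 i.1 : ℝ) * B i.1
        = ∑ i ∈ S, (g j.1 i : ℝ) * B i :=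
      Finset.sum_coe_sort S (fun i => (g j.1 i : ℝ) * B i)
    have e3 : ∑ i ∈ S, (g j.1 i : ℝ) * B i = ∑ i ∈ S, B i * (g i j.1 : ℝ) :=
      Finset.sum_congr rfl fun i _ => by rw [hsym j.1 i]; ring
    have e4 : ((rhs j : ℚ) : ℝ) = -(∑ i ∈ Sᶜ, (a i : ℝ) * (g i j.1 : ℝ)) := by
      rw [hrdef]
      push_cast
      ring
    rw [e1, e2, e3, e4]
    linarith [hslack, hsplit, hcompl]
  have hsolve2 : Mr.mulVec (fun i => (v i : ℝ)) = (fun j => ((rhs j : ℚ) : ℝ)) := by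
    funext j
    have := congrFun hMv j
    have e : Mr.mulVec (fun i => (v i : ℝ)) j = ((M.mulVec v j : ℚ) : ℝ) := by
      simp [Matrix.mulVec, dotProduct, hMrdef]
    rw [e, this]
  have hBv : ∀ i, B i = ((bq i : ℚ) : ℝ) := by
    have hu := hMrinj _ _ (hsolve1.trans hsolve2.symm)
    intro i
    by_cases h : i ∈ S
    · have := congrFun hu ⟨i, h⟩
      rw [hbqdef]
      simp only [dif_pos h]
      exact this
    · rw [hbqdef]
      simp only [dif_neg h]
      exact hofS i h
  refine ⟨bq, ?_, ?_, ?_, ?_, ?_⟩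
  · intro i
    have := hB0 i
    rw [hBv i] at this
    exact_mod_cast this
  · intro i
    have := hBA i
    rw [hBv i] at this
    exact_mod_cast this
  · intro j
    have h := hBnef j
    have e : ∑ i, B i * (g i j : ℝ) = ((∑ i, bq i * g i j : ℚ) : ℝ) := by
      push_cast
      exact Finset.sum_congr rfl fun i _ => by rw [hBv i]
    rw [e] at h
    exact_mod_cast h
  · intro j hj
    have hjR : B j < (a j : ℝ) := by
      rw [hBv j]
      exact_mod_cast hj
    have h := hBslack j hjR
    have e : ∑ i, B i * (g i j : ℝ) = ((∑ i, bq i * g i j : ℚ) : ℝ) := by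
      push_cast
      exact Finset.sum_congr rfl fun i _ => by rw [hBv i]
    rw [e] at h
    exact_mod_cast h
  · intro x hx hxne
    refine negQ x (fun i hi => ?_) hxne
    have h := hx i hi
    have : B i < (a i : ℝ) := by
      rw [hBv i]
      exact_mod_cast h
    simp [hSdef, this]

set_option maxHeartbeats 1000000 in
theorem stmt_6 {V : Type*} [AddCommGroup V] [Module ℚ V]
    (q : V →ₗ[ℚ] V →ₗ[ℚ] ℚ) (hsymm : ∀ x y, q x y = q y x)
    {m : ℕ} (D : Fin m → V) (hind : LinearIndependent ℚ D)
    (hD : ∀ i j, i ≠ j → 0 ≤ q (D i) (D j))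
    (a : Fin m → ℚ) (ha : ∀ i, 0 < a i) :
    ∃! p : (Fin m → ℚ) × (Fin m → ℚ),
      (∀ i, 0 ≤ p.1 i) ∧ (∀ i, 0 ≤ p.2 i) ∧
      (∑ i, a i • D i) = (∑ i, p.1 i • D i) + (∑ i, p.2 i • D i) ∧
      (∀ j, 0 ≤ q (∑ i, p.1 i • D i) (D j)) ∧
      (∀ x : Fin m → ℚ, (∀ i, x i ≠ 0 → 0 < p.2 i) → x ≠ 0 →
        (∑ i, ∑ j, x i * x j * q (D i) (D j)) < 0) ∧
      q (∑ i, p.1 i • D i) (∑ i, p.2 i • D i) = 0 := by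
  classical
  set g : Fin m → Fin m → ℚ := fun i j => q (D i) (D j) with hgdef
  have hgsym : ∀ i j, g i j = g j i := fun i j => hsymm (D i) (D j)
  have key1 : ∀ (x : Fin m → ℚ) (j : Fin m),
      q (∑ i, x i • D i) (D j) = ∑ i, x i * g i j := by
    intro x j
    rw [map_sum q (fun i => x i • D i) Finset.univ, LinearMap.sum_apply]
    refine Finset.sum_congr rfl fun i _ => ?_
    rw [map_smul, LinearMap.smul_apply, smul_eq_mul, hgdef]
  have key2 : ∀ x y : Fin m → ℚ,
      q (∑ i, x i • D i) (∑ j, y j • D j) = ∑ i, ∑ j, x i * y j * g i j := by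
    intro x y
    have e1 : q (∑ i, x i • D i) (∑ j, y j • D j)
        = ∑ j, y j * q (∑ i, x i • D i) (D j) := by
      rw [map_sum (q (∑ i, x i • D i)) (fun j => y j • D j) Finset.univ]
      refine Finset.sum_congr rfl fun j _ => ?_
      rw [map_smul, smul_eq_mul]
    rw [e1]
    rw [show (∑ j, y j * q (∑ i, x i • D i) (D j)) = ∑ j, y j * ∑ i, x i * g i j from
      Finset.sum_congr rfl fun j _ => by rw [key1 x j]]
    exact (qsum_eq g x y).symm
  have hcoef : ∀ x y : Fin m → ℚ, (∑ i, x i • D i) = (∑ i, y i • D i) → ∀ i, x i = y i := by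
    intro x y h i
    have h0 : ∑ i, (x i - y i) • D i = 0 := by
      simp only [sub_smul, Finset.sum_sub_distrib, h, sub_self]
    have := Fintype.linearIndependent_iff.mp hind _ h0 i
    linarith
  obtain ⟨b, hb0, hba, hnef, hslack, hneg⟩ := rat_core g hgsym hD a ha
  set c : Fin m → ℚ := fun i => a i - b i with hcdef
  have hc0 : ∀ i, 0 ≤ c i := fun i => by rw [hcdef]; simp only; linarith [hba i]
  have hsum : (∑ i, a i • D i) = (∑ i, b i • D i) + (∑ i, c i • D i) := by
    rw [← Finset.sum_add_distrib]
    refine Finset.sum_congr rfl fun i _ => ?_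
    rw [← add_smul, hcdef]
    congr 1
    ring
  have hnefq : ∀ j, 0 ≤ q (∑ i, b i • D i) (D j) := fun j => by
    rw [key1]; exact hnef j
  have hnegq : ∀ x : Fin m → ℚ, (∀ i, x i ≠ 0 → 0 < c i) → x ≠ 0 →
      (∑ i, ∑ j, x i * x j * g i j) < 0 := by
    intro x hx hxne
    refine hneg x (fun i hi => ?_) hxne
    have := hx i hi
    rw [hcdef] at this
    simp only at this
    linarith
  have horthq : q (∑ i, b i • D i) (∑ i, c i • D i) = 0 := by
    rw [key2, qsum_eq g b c]
    refine Finset.sum_eq_zero fun j _ => ?_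
    by_cases h : b j < a j
    · rw [hslack j h, mul_zero]
    · have hcj : c j = 0 := by
        rw [hcdef]; simp only; linarith [not_lt.mp h, hba j]
      rw [hcj, zero_mul]
  refine ⟨(b, c), ⟨hb0, hc0, hsum, hnefq, hnegq, horthq⟩, ?_⟩
  rintro ⟨b', c'⟩ ⟨h1, h2, h3, h4, h5, h6⟩
  have hsum' : ∀ i, a i = b' i + c' i := by
    have h3' : (∑ i, a i • D i) = ∑ i, (b' i + c' i) • D i := by
      rw [h3, ← Finset.sum_add_distrib]
      exact Finset.sum_congr rfl fun i _ => (add_smul _ _ _).symm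
    exact fun i => hcoef _ _ h3' i
  have nef' : ∀ j, 0 ≤ ∑ i, b' i * g i j := fun j => by
    rw [← key1 b' j]; exact h4 j
  have orth' : ∑ i, ∑ j, b' i * c' j * g i j = 0 := by
    rw [← key2 b' c']; exact h6
  have horth : ∑ i, ∑ j, b i * c j * g i j = 0 := by
    rw [← key2 b c]; exact horthq
  set x : Fin m → ℚ := fun i => c' i - c i with hxdef
  have hxb : ∀ i, x i = b i - b' i := by
    intro i
    rw [hxdef, hcdef]
    simp only
    have := hsum' i
    linarith
  have hQxx : 0 ≤ ∑ i, ∑ j, x i * x j * g i j := by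
    have e : ∑ i, ∑ j, x i * x j * g i j = ∑ i, ∑ j, (b i - b' i) * (c' j - c j) * g i j := by
      refine Finset.sum_congr rfl fun i _ => Finset.sum_congr rfl fun j _ => ?_
      rw [hxb i, hxdef]
    rw [e, qsum_sub g b b' c' c, horth, orth']
    have hp1 : 0 ≤ ∑ i, ∑ j, b i * c' j * g i j := by
      rw [qsum_eq g b c']
      exact Finset.sum_nonneg fun j _ => mul_nonneg (h2 j) (hnef j)
    have hp2 : 0 ≤ ∑ i, ∑ j, b' i * c j * g i j := by
      rw [qsum_eq g b' c]
      exact Finset.sum_nonneg fun j _ => mul_nonneg (hc0 j) (nef' j)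
    linarith
  set xp : Fin m → ℚ := fun i => max (x i) 0 with hxpdef
  set xm : Fin m → ℚ := fun i => max (-(x i)) 0 with hxmdef
  have hxp0 : ∀ i, 0 ≤ xp i := fun i => le_max_right _ _
  have hxm0 : ∀ i, 0 ≤ xm i := fun i => le_max_right _ _
  have hxpm : ∀ i, x i = xp i - xm i := by
    intro i
    rw [hxpdef, hxmdef]
    simp only
    rcases le_total 0 (x i) with h | h
    · rw [max_eq_left h, max_eq_right (neg_nonpos.mpr h)]; ring
    · rw [max_eq_right h, max_eq_left (neg_nonneg.mpr h)]; ring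
  have hprod : ∀ i, xp i * xm i = 0 := by
    intro i
    rw [hxpdef, hxmdef]
    simp only
    rcases le_total 0 (x i) with h | h
    · rw [max_eq_right (neg_nonpos.mpr h), mul_zero]
    · rw [max_eq_right h, zero_mul]
  have hsplit : ∑ i, ∑ j, x i * x j * g i j
      = ((∑ i, ∑ j, xp i * xp j * g i j) - (∑ i, ∑ j, xp i * xm j * g i j))
        - ((∑ i, ∑ j, xm i * xp j * g i j) - (∑ i, ∑ j, xm i * xm j * g i j)) := by
    rw [← qsum_sub g xp xm xp xm]
    refine Finset.sum_congr rfl fun i _ => Finset.sum_congr rfl fun j _ => ?_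
    rw [hxpm i, hxpm j]
  have hcross : 0 ≤ ∑ i, ∑ j, xp i * xm j * g i j := by
    refine Finset.sum_nonneg fun i _ => Finset.sum_nonneg fun j _ => ?_
    by_cases hij : i = j
    · rw [hij, hprod j, zero_mul]
    · exact mul_nonneg (mul_nonneg (hxp0 i) (hxm0 j)) (hD i j hij)
  have hcross' : ∑ i, ∑ j, xm i * xp j * g i j = ∑ i, ∑ j, xp i * xm j * g i j :=
    qsum_symm g hgsym xm xp
  have hxpsupp : ∀ i, xp i ≠ 0 → 0 < c' i := by
    intro i hi
    have hxi : 0 < x i := by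
      rcases le_total (x i) 0 with h | h
      · exact absurd (by rw [hxpdef]; simp only; rw [max_eq_right h]) hi
      · rcases lt_or_eq_of_le h with h' | h'
        · exact h'
        · exact absurd (by rw [hxpdef]; simp only; rw [← h', max_self]) hi
    have := hc0 i
    rw [hxdef] at hxi
    simp only at hxi
    linarith
  have hxmsupp : ∀ i, xm i ≠ 0 → 0 < c i := by
    intro i hi
    have hxi : x i < 0 := by
      rcases le_total 0 (x i) with h | h
      · exact absurd (by rw [hxmdef]; simp only; rw [max_eq_right (neg_nonpos.mpr h)]) hi
      · rcases lt_or_eq_of_le h with h' | h'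
        · exact h'
        · exact absurd (by rw [hxmdef]; simp only; rw [h']; simp) hi
    have := h2 i
    rw [hxdef] at hxi
    simp only at hxi
    linarith
  have hQpp : ∑ i, ∑ j, xp i * xp j * g i j ≤ 0 := by
    by_cases hp : xp = 0
    · rw [hp]
      simp
    · exact le_of_lt (h5 xp hxpsupp hp)
  have hQmm : ∑ i, ∑ j, xm i * xm j * g i j ≤ 0 := by
    by_cases hp : xm = 0
    · rw [hp]
      simp
    · exact le_of_lt (hnegq xm hxmsupp hp)
  have hQpp0 : ∑ i, ∑ j, xp i * xp j * g i j = 0 := by linarith [hsplit ▸ hQxx]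
  have hQmm0 : ∑ i, ∑ j, xm i * xm j * g i j = 0 := by linarith [hsplit ▸ hQxx]
  have hxpz : xp = 0 := by
    by_contra hp
    exact absurd hQpp0 (ne_of_lt (h5 xp hxpsupp hp))
  have hxmz : xm = 0 := by
    by_contra hp
    exact absurd hQmm0 (ne_of_lt (hnegq xm hxmsupp hp))
  have hxz : ∀ i, x i = 0 := by
    intro i
    rw [hxpm i, congrFun hxpz i, congrFun hxmz i]
    simp
  have hc' : c' = c := by
    funext i
    have := hxz i
    rw [hxdef] at this
    simp only at this
    linarith
  have hb' : b' = b := by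
    funext i
    have h1' := hsum' i
    have h2' := congrFun hc' i
    rw [hcdef] at h2'
    simp only at h2'
    linarith
  rw [hb', hc']
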